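/- PSL(2,ℤ) admits the presentation ⟨a, b | aba = bab, ababab = 1⟩, via a ↦ class of [[1,-1],[0,1]] and b ↦ class of [[1,0],[1,1]]. -/

import Mathlib

abbrev SL2Z := Matrix.SpecialLinearGroup (Fin 2) ℤ

instance : Fact (Even (Fintype.card (Fin 2))) := ⟨by decide⟩

/-- The subgroup `{±I}` of `SL(2,ℤ)`. -/
def pmI : Subgroup SL2Z := Subgroup.zpowers (-1 : SL2Z)

instance : pmI.Normal := by
  constructor
  intro x hx g
  obtain ⟨k, rfl⟩ := hx
  have hc : ∀ h : SL2Z, (-1 : SL2Z) ^ k * h = h * (-1 : SL2Z) ^ k := fun h =>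
    ((Commute.neg_one_left h).zpow_left k).eq
  rw [← hc g, mul_assoc, mul_inv_cancel, mul_one]
  exact ⟨k, rfl⟩

/-- `PSL(2,ℤ) = SL(2,ℤ)/{±I}`. -/
abbrev PSL2Z := SL2Z ⧸ pmI

def A : SL2Z := ⟨!![1, -1; 0, 1], by decide⟩
def B : SL2Z := ⟨!![1, 0; 1, 1], by decide⟩

/-- The relations `aba(bab)⁻¹` and `ababab` in the free group on two generators. -/
def rels : Set (FreeGroup Bool) :=
  letI a := FreeGroup.of true
  letI b := FreeGroup.of false
  {a * b * a * (b * a * b)⁻¹, a * b * a * b * a * b}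

/-! ### Auxiliary development -/

namespace PSLAux

open Matrix ModularGroup Monoid

noncomputable section

/-! #### Matrix identities in `SL(2,ℤ)` -/

def Um : SL2Z := ⟨!![0, -1; 1, 1], by decide⟩
def Um2 : SL2Z := ⟨!![-1, -1; 1, 0], by decide⟩

lemma hABA : A * B * A = ModularGroup.S := by
  apply Subtype.ext
  show (A.1 * B.1) * A.1 = _
  rw [ModularGroup.coe_S]
  norm_num [A, B, Matrix.mul_fin_two]

lemma hBAB : A * B * A = B * A * B := by
  apply Subtype.ext
  show (A.1 * B.1) * A.1 = (B.1 * A.1) * B.1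
  norm_num [A, B, Matrix.mul_fin_two]

lemma hAB : A * B = Um := by
  apply Subtype.ext
  show A.1 * B.1 = Um.1
  norm_num [A, B, Um, Matrix.mul_fin_two]

lemma hUmUm : Um * Um = Um2 := by
  apply Subtype.ext
  show Um.1 * Um.1 = Um2.1
  norm_num [Um, Um2, Matrix.mul_fin_two]

lemma hUm3 : Um * Um * Um = -1 := by
  rw [hUmUm]
  apply Subtype.ext
  show Um2.1 * Um.1 = -(1 : Matrix (Fin 2) (Fin 2) ℤ)
  rw [Matrix.one_fin_two]
  norm_num [Um, Um2, Matrix.mul_fin_two]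

lemma hSS : ModularGroup.S * ModularGroup.S = -1 := by
  apply Subtype.ext
  show ModularGroup.S.1 * ModularGroup.S.1 = -(1 : Matrix (Fin 2) (Fin 2) ℤ)
  rw [Matrix.one_fin_two, ModularGroup.coe_S]
  norm_num [Matrix.mul_fin_two]

lemma hT_eq : ModularGroup.T = A⁻¹ := by
  have : A = ModularGroup.T⁻¹ := Subtype.ext ModularGroup.coe_T_inv.symm
  rw [this, inv_inv]

lemma hsix : A * B * A * B * A * B = -1 := by
  have h : A * B * A * B * A * B = (A*B) * (A*B) * (A*B) := by group
  rw [h, hAB, hUm3]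

lemma det_entries (g : SL2Z) : g 0 0 * g 1 1 - g 0 1 * g 1 0 = 1 := by
  have := g.2
  rw [Matrix.det_fin_two] at this
  linarith

lemma mul_entry (g h : SL2Z) (i j : Fin 2) :
    (g * h) i j = g i 0 * h 0 j + g i 1 * h 1 j := by
  show (g.1 * h.1) i j = _
  rw [Matrix.mul_apply, Fin.sum_univ_two]

/-! #### `SL(2,ℤ)` is generated by `A` and `B` -/

lemma key_entry (q : ℤ) (g : SL2Z) :
    (ModularGroup.S * ModularGroup.T ^ q * g) 1 0 = g 0 0 + q * g 1 0 := by
  have hST : ∀ j : Fin 2, (ModularGroup.S * ModularGroup.T ^ q) 1 j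
      = (!![0,-1;1,q] : Matrix (Fin 2) (Fin 2) ℤ) 1 j := by
    intro j
    rw [mul_entry]
    have h0 : (ModularGroup.T ^ q) 0 j = (!![1,q;0,1] : Matrix (Fin 2) (Fin 2) ℤ) 0 j := by
      rw [ModularGroup.coe_T_zpow]
    have h1 : (ModularGroup.T ^ q) 1 j = (!![1,q;0,1] : Matrix (Fin 2) (Fin 2) ℤ) 1 j := by
      rw [ModularGroup.coe_T_zpow]
    rw [h0, h1]
    fin_cases j <;> simp [ModularGroup.coe_S]
  rw [mul_entry, hST 0, hST 1]
  simp

theorem closure_AB : Subgroup.closure ({A, B} : Set SL2Z) = ⊤ := by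
  rw [eq_top_iff]
  intro g _
  set H := Subgroup.closure ({A, B} : Set SL2Z) with hH
  have hA : A ∈ H := Subgroup.subset_closure (by simp)
  have hB : B ∈ H := Subgroup.subset_closure (by simp)
  have hT : ModularGroup.T ∈ H := by rw [hT_eq]; exact inv_mem hA
  have hS : ModularGroup.S ∈ H := by rw [← hABA]; exact mul_mem (mul_mem hA hB) hA
  have hneg : (-1 : SL2Z) ∈ H := by rw [← hSS]; exact mul_mem hS hS
  suffices hmain : ∀ n : ℕ, ∀ g : SL2Z, (g 1 0).natAbs = n → g ∈ H from hmain _ g rfl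
  intro n
  induction n using Nat.strong_induction_on with
  | _ n ih =>
    intro g hg
    rcases eq_or_ne (g 1 0) 0 with hc | hc
    · have hdet := det_entries g
      rw [hc, mul_zero, sub_zero] at hdet
      rcases Int.mul_eq_one_iff_eq_one_or_neg_one.mp hdet with ⟨h00, h11⟩ | ⟨h00, h11⟩
      · have hgeq : g = ModularGroup.T ^ (g 0 1) := by
          apply Subtype.ext
          rw [ModularGroup.coe_T_zpow]
          have he : (g : Matrix (Fin 2) (Fin 2) ℤ) = !![g 0 0, g 0 1; g 1 0, g 1 1] :=
            Matrix.eta_fin_two _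
          conv_lhs => rw [he]
          rw [h00, h11, hc]
        rw [hgeq]; exact zpow_mem hT _
      · have hgeq : g = (-1 : SL2Z) * ModularGroup.T ^ (-(g 0 1)) := by
          apply Subtype.ext
          rw [Matrix.SpecialLinearGroup.coe_mul, ModularGroup.coe_T_zpow]
          have hn : ((-1 : SL2Z) : Matrix (Fin 2) (Fin 2) ℤ) = -1 := rfl
          rw [hn, neg_one_mul]
          have he : (g : Matrix (Fin 2) (Fin 2) ℤ) = !![g 0 0, g 0 1; g 1 0, g 1 1] :=
            Matrix.eta_fin_two _
          conv_lhs => rw [he]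
          rw [h00, h11, hc]
          norm_num
        rw [hgeq]; exact mul_mem hneg (zpow_mem hT _)
    · set q : ℤ := -(g 0 0 / g 1 0) with hq
      have hkey : ((ModularGroup.S * ModularGroup.T ^ q * g) 1 0).natAbs < n := by
        rw [key_entry]
        have : g 0 0 + q * g 1 0 = g 0 0 % g 1 0 := by
          rw [hq, Int.emod_def]; ring
        rw [this]
        have h1 : 0 ≤ g 0 0 % g 1 0 := Int.emod_nonneg _ hc
        have h2 : g 0 0 % g 1 0 < |g 1 0| := Int.emod_lt_abs _ hc
        rw [Int.abs_eq_natAbs] at h2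
        omega
      have hmem := ih _ (hg ▸ hkey) (ModularGroup.S * ModularGroup.T ^ q * g) rfl
      have hgeq : g = (ModularGroup.T ^ q)⁻¹ * ModularGroup.S⁻¹ *
          (ModularGroup.S * ModularGroup.T ^ q * g) := by group
      rw [hgeq]
      exact mul_mem (mul_mem (inv_mem (zpow_mem hT q)) (inv_mem hS)) hmem

/-! #### The action of `PSL(2,ℤ)` on irrational numbers -/

def mob (g : SL2Z) (x : ℝ) : ℝ :=
  ((g 0 0 : ℝ) * x + (g 0 1 : ℝ)) / ((g 1 0 : ℝ) * x + (g 1 1 : ℝ))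

lemma denom_ne (g : SL2Z) {x : ℝ} (hx : Irrational x) :
    (g 1 0 : ℝ) * x + (g 1 1 : ℝ) ≠ 0 := by
  intro h
  rcases eq_or_ne (g 1 0) 0 with h0 | h0
  · have hd := det_entries g
    rw [h0] at hd h
    simp at h
    have h2 : g 1 1 = 0 := by exact_mod_cast h
    rw [h2] at hd
    simp at hd
  · apply hx
    refine ⟨(-(g 1 1 : ℚ)) / (g 1 0 : ℚ), ?_⟩
    have hc : ((g 1 0 : ℝ)) ≠ 0 := Int.cast_ne_zero.mpr h0
    push_cast
    field_simp
    linarith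

lemma mob_irrational (g : SL2Z) {x : ℝ} (hx : Irrational x) : Irrational (mob g x) := by
  rintro ⟨q, hq⟩
  have hd := denom_ne g hx
  have hdetR : (g 0 0 : ℝ) * (g 1 1 : ℝ) - (g 0 1 : ℝ) * (g 1 0 : ℝ) = 1 := by
    exact_mod_cast det_entries g
  rw [mob, eq_div_iff hd] at hq
  rcases eq_or_ne ((g 0 0 : ℝ) - q * g 1 0) 0 with h0 | h0
  · have ha : (g 0 0 : ℝ) = q * g 1 0 := by linarith
    have hb : (g 0 1 : ℝ) = q * g 1 1 := by
      rw [ha] at hq; nlinarith [hq]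
    rw [ha, hb] at hdetR
    nlinarith [hdetR]
  · apply hx
    refine ⟨((q : ℚ) * (g 1 1 : ℚ) - (g 0 1 : ℚ)) / ((g 0 0 : ℚ) - q * (g 1 0 : ℚ)), ?_⟩
    push_cast
    rw [div_eq_iff h0]
    nlinarith [hq]

lemma mob_one (x : ℝ) : mob 1 x = x := by
  simp [mob, Matrix.SpecialLinearGroup.coe_one, Matrix.one_apply]

lemma mob_mul (g h : SL2Z) {x : ℝ} (hx : Irrational x) :
    mob (g * h) x = mob g (mob h x) := by
  have hdh := denom_ne h hx
  have hdg := denom_ne g (mob_irrational h hx)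
  have hdgh := denom_ne (g * h) hx
  simp only [mob] at hdg ⊢
  simp only [mul_entry] at hdgh ⊢
  push_cast at hdgh ⊢
  rw [div_eq_div_iff hdgh hdg]
  field_simp
  ring

def Irr : Type := {x : ℝ // Irrational x}

instance : SMul SL2Z Irr := ⟨fun g x => ⟨mob g x.1, mob_irrational g x.2⟩⟩

lemma smul_coe (g : SL2Z) (x : Irr) : (g • x).1 = mob g x.1 := rfl

instance : MulAction SL2Z Irr where
  one_smul x := Subtype.ext (mob_one x.1)
  mul_smul g h x := Subtype.ext (mob_mul g h x.2)

lemma neg_one_smul_irr (x : Irr) : ((-1 : SL2Z)) • x = x := by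
  apply Subtype.ext
  rw [smul_coe]
  have h : ∀ i j : Fin 2, ((-1 : SL2Z) : Matrix (Fin 2) (Fin 2) ℤ) i j
      = -(1 : Matrix (Fin 2) (Fin 2) ℤ) i j := by
    intro i j; rfl
  simp [mob, h, Matrix.one_apply]

lemma pmI_le_ker : pmI ≤ (MulAction.toPermHom SL2Z Irr).ker := by
  rw [pmI, Subgroup.zpowers_le]
  ext x
  exact neg_one_smul_irr x

def permPSL : PSL2Z →* Equiv.Perm Irr :=
  QuotientGroup.lift pmI (MulAction.toPermHom SL2Z Irr) pmI_le_ker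

instance PSLact : MulAction PSL2Z Irr := MulAction.compHom _ permPSL

lemma psl_smul (g : SL2Z) (x : Irr) :
    (QuotientGroup.mk' pmI g) • x = g • x := rfl

end

end PSLAux

/-! #### Homs from cyclic groups -/

section ZModHom
variable {G : Type*} [Group G]

def zmodHom (n : ℕ) [NeZero n] (g : G) (h : g ^ n = 1) : Multiplicative (ZMod n) →* G :=
  MonoidHom.mk' (fun x => g ^ (Multiplicative.toAdd x).val) (by
    intro x y
    show g ^ ((Multiplicative.toAdd x) + (Multiplicative.toAdd y)).val = _
    rw [ZMod.val_add, ← pow_eq_pow_mod _ h, pow_add])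

lemma zmodHom_apply (n : ℕ) [NeZero n] (g : G) (h : g ^ n = 1) (x : Multiplicative (ZMod n)) :
    zmodHom n g h x = g ^ (Multiplicative.toAdd x).val := rfl

end ZModHom

namespace PSLAux

open Matrix ModularGroup Monoid Pointwise

noncomputable section

/-! #### The elements `s`, `u` of `PSL(2,ℤ)` -/

def s : PSL2Z := QuotientGroup.mk' pmI ModularGroup.S
def u : PSL2Z := QuotientGroup.mk' pmI Um

lemma mk_neg_one : (QuotientGroup.mk' pmI) (-1 : SL2Z) = 1 :=
  (QuotientGroup.eq_one_iff _).mpr (Subgroup.mem_zpowers _)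

lemma hs2 : s ^ 2 = 1 := by
  rw [s, pow_two, ← _root_.map_mul, hSS, mk_neg_one]

lemma hu3 : u ^ 3 = 1 := by
  have h3 : Um ^ 3 = -1 := by
    rw [pow_succ, pow_two]; exact hUm3
  rw [u, ← _root_.map_pow, h3, mk_neg_one]

def Hfam : Bool → Type
  | true => Multiplicative (ZMod 2)
  | false => Multiplicative (ZMod 3)

instance instGroupHfam : ∀ i : Bool, Group (Hfam i)
  | true => inferInstanceAs (Group (Multiplicative (ZMod 2)))
  | false => inferInstanceAs (Group (Multiplicative (ZMod 3)))

def fK : ∀ i : Bool, Hfam i →* PSL2Z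
  | true => zmodHom 2 s hs2
  | false => zmodHom 3 u hu3

def kap : Monoid.CoprodI Hfam →* PSL2Z := Monoid.CoprodI.lift fK

/-! #### Ping-pong -/

def Xset : Bool → Set Irr
  | true => {x | 0 < x.1}
  | false => {x | x.1 < 0}

lemma smul_S {x : Irr} (hx : x.1 < 0) : 0 < (s • x).1 := by
  have h : (s • x).1 = mob ModularGroup.S x.1 := rfl
  rw [h, mob]
  have h00 : (ModularGroup.S 0 0 : ℤ) = 0 := rfl
  have h01 : (ModularGroup.S 0 1 : ℤ) = -1 := rfl
  have h10 : (ModularGroup.S 1 0 : ℤ) = 1 := rfl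
  have h11 : (ModularGroup.S 1 1 : ℤ) = 0 := rfl
  rw [h00, h01, h10, h11]
  push_cast
  rw [zero_mul, zero_add, one_mul, add_zero]
  exact div_pos_of_neg_of_neg (by norm_num) hx

lemma smul_U {x : Irr} (hx : 0 < x.1) : (u • x).1 < 0 := by
  have h : (u • x).1 = mob Um x.1 := rfl
  rw [h, mob]
  have h00 : (Um 0 0 : ℤ) = 0 := rfl
  have h01 : (Um 0 1 : ℤ) = -1 := rfl
  have h10 : (Um 1 0 : ℤ) = 1 := rfl
  have h11 : (Um 1 1 : ℤ) = 1 := rfl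
  rw [h00, h01, h10, h11]
  push_cast
  rw [zero_mul, zero_add, one_mul]
  exact div_neg_of_neg_of_pos (by norm_num) (by linarith)

lemma smul_U2 {x : Irr} (hx : 0 < x.1) : ((u * u) • x).1 < 0 := by
  have hmk : u * u = QuotientGroup.mk' pmI Um2 := by
    rw [u, ← _root_.map_mul, hUmUm]
  have h : ((u * u) • x).1 = mob Um2 x.1 := by rw [hmk]; rfl
  rw [h, mob]
  have h00 : (Um2 0 0 : ℤ) = -1 := rfl
  have h01 : (Um2 0 1 : ℤ) = -1 := rfl
  have h10 : (Um2 1 0 : ℤ) = 1 := rfl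
  have h11 : (Um2 1 1 : ℤ) = 0 := rfl
  rw [h00, h01, h10, h11]
  push_cast
  rw [one_mul, add_zero, neg_one_mul]
  exact div_neg_of_neg_of_pos (by linarith) hx

lemma hppT (h : Multiplicative (ZMod 2)) (hne : h ≠ 1) :
    (zmodHom 2 s hs2 h) • Xset false ⊆ Xset true := by
  have hne' : Multiplicative.toAdd h ≠ 0 := by
    intro hh
    exact hne (by rw [← ofAdd_toAdd h, hh, ofAdd_zero])
  have hval : Multiplicative.toAdd h = 1 := by
    have h2 : ∀ z : ZMod 2, z = 0 ∨ z = 1 := by decide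
    rcases h2 (Multiplicative.toAdd h) with h0 | h1
    · exact absurd h0 hne'
    · exact h1
  have hfk : zmodHom 2 s hs2 h = s := by
    rw [zmodHom_apply, hval]
    norm_num [ZMod.val_one]
  rw [hfk]
  intro z hz
  rw [Set.mem_smul_set] at hz
  obtain ⟨y, hy, rfl⟩ := hz
  simp only [Xset, Set.mem_setOf_eq] at hy ⊢
  exact smul_S hy

lemma hppF (h : Multiplicative (ZMod 3)) (hne : h ≠ 1) :
    (zmodHom 3 u hu3 h) • Xset true ⊆ Xset false := by
  have hne' : Multiplicative.toAdd h ≠ 0 := by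
    intro hh
    exact hne (by rw [← ofAdd_toAdd h, hh, ofAdd_zero])
  have hval : Multiplicative.toAdd h = 1 ∨ Multiplicative.toAdd h = 2 := by
    have h3 : ∀ z : ZMod 3, z = 0 ∨ z = 1 ∨ z = 2 := by decide
    rcases h3 (Multiplicative.toAdd h) with h0 | h1 | h2
    · exact absurd h0 hne'
    · exact Or.inl h1
    · exact Or.inr h2
  rcases hval with h1 | h2
  · have hfk : zmodHom 3 u hu3 h = u := by
      rw [zmodHom_apply, h1]
      have : (1 : ZMod 3).val = 1 := by decide
      rw [this, pow_one]
    rw [hfk]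
    intro z hz
    rw [Set.mem_smul_set] at hz
    obtain ⟨y, hy, rfl⟩ := hz
    simp only [Xset, Set.mem_setOf_eq] at hy ⊢
    exact smul_U hy
  · have hfk : zmodHom 3 u hu3 h = u * u := by
      rw [zmodHom_apply, h2]
      have : (2 : ZMod 3).val = 2 := by decide
      rw [this, pow_two]
    rw [hfk]
    intro z hz
    rw [Set.mem_smul_set] at hz
    obtain ⟨y, hy, rfl⟩ := hz
    simp only [Xset, Set.mem_setOf_eq] at hy ⊢
    exact smul_U2 hy

lemma kap_inj : Function.Injective kap := by
  apply Monoid.CoprodI.lift_injective_of_ping_pong fK ?_ Xset ?_ ?_ ?_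
  · refine Or.inr ⟨false, ?_⟩
    show (3 : Cardinal) ≤ Cardinal.mk (Multiplicative (ZMod 3))
    have h3 : Cardinal.mk (Multiplicative (ZMod 3)) = 3 := by
      rw [Cardinal.mk_fintype]
      norm_num
    rw [h3]
  · intro i
    cases i
    · exact ⟨⟨-Real.sqrt 2, irrational_sqrt_two.neg⟩, by
        simp only [Xset, Set.mem_setOf_eq]
        have := Real.sqrt_pos.mpr (by norm_num : (0:ℝ) < 2)
        show -Real.sqrt 2 < 0
        linarith⟩
    · exact ⟨⟨Real.sqrt 2, irrational_sqrt_two⟩, by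
        simp only [Xset, Set.mem_setOf_eq]
        exact Real.sqrt_pos.mpr (by norm_num)⟩
  · intro i j hij
    have hd : Disjoint (Xset true) (Xset false) := by
      rw [Set.disjoint_left]
      intro x hx hx'
      simp only [Xset, Set.mem_setOf_eq] at hx hx'
      linarith
    cases i <;> cases j <;> simp_all [Function.onFun]
    · exact hd.symm
  · intro i j hij
    cases i
    · cases j
      · simp at hij
      · exact fun h hne => hppF h hne
    · cases j
      · exact fun h hne => hppT h hne
      · simp at hij

/-! #### The presented group side -/

def aP : PresentedGroup rels := PresentedGroup.mk rels (FreeGroup.of true)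
def bP : PresentedGroup rels := PresentedGroup.mk rels (FreeGroup.of false)

lemma mk_rels_one {r : FreeGroup Bool} (hr : r ∈ rels) : PresentedGroup.mk rels r = 1 :=
  (QuotientGroup.eq_one_iff r).mpr (Subgroup.subset_normalClosure hr)

lemma mem_rels1 : FreeGroup.of true * FreeGroup.of false * FreeGroup.of true *
    (FreeGroup.of false * FreeGroup.of true * FreeGroup.of false)⁻¹ ∈ rels :=
  Set.mem_insert _ _

lemma mem_rels2 : FreeGroup.of true * FreeGroup.of false * FreeGroup.of true *
    FreeGroup.of false * FreeGroup.of true * FreeGroup.of false ∈ rels :=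
  Set.mem_insert_of_mem _ rfl

lemma rel1 : aP * bP * aP = bP * aP * bP := by
  have h := mk_rels_one mem_rels1
  simp only [_root_.map_mul, map_inv] at h
  exact mul_inv_eq_one.mp h

lemma rel2 : aP * bP * aP * bP * aP * bP = 1 := by
  have h := mk_rels_one mem_rels2
  simp only [_root_.map_mul] at h
  exact h

lemma hx2 : (aP * bP * aP) ^ 2 = 1 := by
  rw [pow_two]
  calc (aP * bP * aP) * (aP * bP * aP) = (aP * bP * aP) * (bP * aP * bP) := by rw [rel1]
    _ = aP * bP * aP * bP * aP * bP := by group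
    _ = 1 := rel2

lemma hy3 : (aP * bP) ^ 3 = 1 := by
  have h : (aP * bP) ^ 3 = aP * bP * aP * bP * aP * bP := by
    rw [pow_succ, pow_two]
    group
  rw [h, rel2]

def jf : ∀ i : Bool, Hfam i →* PresentedGroup rels
  | true => zmodHom 2 (aP * bP * aP) hx2
  | false => zmodHom 3 (aP * bP) hy3

def jhom : Monoid.CoprodI Hfam →* PresentedGroup rels := Monoid.CoprodI.lift jf

lemma jhom_x : jhom (Monoid.CoprodI.of (M := Hfam) (i := true)
    (show Hfam true from Multiplicative.ofAdd (1 : ZMod 2))) = aP * bP * aP := by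
  rw [jhom, Monoid.CoprodI.lift_of]
  show (aP * bP * aP) ^ (Multiplicative.toAdd (Multiplicative.ofAdd (1 : ZMod 2))).val = _
  rw [toAdd_ofAdd]
  norm_num [ZMod.val_one]

lemma jhom_y : jhom (Monoid.CoprodI.of (M := Hfam) (i := false)
    (show Hfam false from Multiplicative.ofAdd (1 : ZMod 3))) = aP * bP := by
  rw [jhom, Monoid.CoprodI.lift_of]
  show (aP * bP) ^ (Multiplicative.toAdd (Multiplicative.ofAdd (1 : ZMod 3))).val = _
  rw [toAdd_ofAdd]
  have : (1 : ZMod 3).val = 1 := by decide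
  rw [this, pow_one]

lemma jhom_surj : Function.Surjective jhom := by
  rw [← MonoidHom.range_eq_top, eq_top_iff, ← PresentedGroup.closure_range_of rels,
    Subgroup.closure_le]
  have h1 : aP * bP * aP ∈ jhom.range := ⟨_, jhom_x⟩
  have h2 : aP * bP ∈ jhom.range := ⟨_, jhom_y⟩
  rintro _ ⟨t, rfl⟩
  cases t
  · have hb : (PresentedGroup.of false : PresentedGroup rels)
        = (aP * bP * aP)⁻¹ * (aP * bP) ^ 2 := by
      show bP = (aP * bP * aP)⁻¹ * (aP * bP) ^ 2
      rw [pow_two]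
      group
    rw [hb]
    exact mul_mem (inv_mem h1) (pow_mem h2 2)
  · have ha : (PresentedGroup.of true : PresentedGroup rels)
        = (aP * bP)⁻¹ * (aP * bP * aP) := by
      show aP = (aP * bP)⁻¹ * (aP * bP * aP)
      group
    rw [ha]
    exact mul_mem (inv_mem h2) h1

/-! #### The homomorphism to `PSL(2,ℤ)` -/

def fGen : Bool → PSL2Z := fun t => if t then QuotientGroup.mk' pmI A else QuotientGroup.mk' pmI B

lemma fGen_rels : ∀ r ∈ rels, FreeGroup.lift fGen r = 1 := by
  intro r hr
  simp only [rels, Set.mem_insert_iff, Set.mem_singleton_iff] at hr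
  have hfA : FreeGroup.lift fGen (FreeGroup.of true) = QuotientGroup.mk' pmI A := by
    rw [FreeGroup.lift_apply_of]; rfl
  have hfB : FreeGroup.lift fGen (FreeGroup.of false) = QuotientGroup.mk' pmI B := by
    rw [FreeGroup.lift_apply_of]; rfl
  rcases hr with rfl | rfl
  · simp only [_root_.map_mul, map_inv, hfA, hfB]
    rw [mul_inv_eq_one, ← _root_.map_mul, ← _root_.map_mul, ← _root_.map_mul, ← _root_.map_mul]
    exact congrArg _ hBAB
  · simp only [_root_.map_mul, hfA, hfB]
    rw [← _root_.map_mul, ← _root_.map_mul, ← _root_.map_mul, ← _root_.map_mul, ← _root_.map_mul,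
      hsix, mk_neg_one]

def fP : PresentedGroup rels →* PSL2Z := PresentedGroup.toGroup fGen_rels

lemma fP_a : fP aP = QuotientGroup.mk' pmI A := PresentedGroup.toGroup.of fGen_rels

lemma fP_b : fP bP = QuotientGroup.mk' pmI B := PresentedGroup.toGroup.of fGen_rels

lemma fP_x : fP (aP * bP * aP) = s := by
  rw [_root_.map_mul, _root_.map_mul, fP_a, fP_b, ← _root_.map_mul, ← _root_.map_mul, hABA, s]

lemma fP_y : fP (aP * bP) = u := by
  rw [_root_.map_mul, fP_a, fP_b, ← _root_.map_mul, hAB, u]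

lemma hcomp : fP.comp jhom = kap := by
  apply Monoid.CoprodI.ext_hom
  intro i
  apply MonoidHom.ext
  intro x
  cases i
  · simp only [MonoidHom.comp_apply, jhom, kap, Monoid.CoprodI.lift_of]
    show fP ((aP * bP) ^ (Multiplicative.toAdd x).val) = u ^ (Multiplicative.toAdd x).val
    rw [_root_.map_pow, fP_y]
  · simp only [MonoidHom.comp_apply, jhom, kap, Monoid.CoprodI.lift_of]
    show fP ((aP * bP * aP) ^ (Multiplicative.toAdd x).val) = s ^ (Multiplicative.toAdd x).val
    rw [_root_.map_pow, fP_x]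

lemma fP_inj : Function.Injective fP := by
  rw [injective_iff_map_eq_one]
  intro w hw
  obtain ⟨v, rfl⟩ := jhom_surj w
  have hv : kap v = 1 := by
    rw [← hcomp, MonoidHom.comp_apply]; exact hw
  have hv1 : v = 1 := kap_inj (by rw [hv, _root_.map_one])
  rw [hv1, _root_.map_one]

lemma fP_surj : Function.Surjective fP := by
  intro p
  obtain ⟨g, rfl⟩ := QuotientGroup.mk'_surjective pmI p
  have hg : g ∈ Subgroup.closure ({A, B} : Set SL2Z) := by rw [closure_AB]; trivial
  induction hg using Subgroup.closure_induction with
  | mem x hx =>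
    rcases hx with rfl | rfl
    · exact ⟨aP, fP_a⟩
    · exact ⟨bP, fP_b⟩
  | one => exact ⟨1, by rw [_root_.map_one, _root_.map_one]⟩
  | mul x y hx hy hx' hy' =>
    obtain ⟨w1, hw1⟩ := hx'
    obtain ⟨w2, hw2⟩ := hy'
    exact ⟨w1 * w2, by rw [_root_.map_mul, _root_.map_mul, hw1, hw2]⟩
  | inv x hx hx' =>
    obtain ⟨w1, hw1⟩ := hx'
    exact ⟨w1⁻¹, by rw [map_inv, map_inv, hw1]⟩

end

end PSLAux

theorem stmt4 :
    ∃ e : PresentedGroup rels ≃* PSL2Z,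
      e (PresentedGroup.of true) = QuotientGroup.mk' pmI A ∧
      e (PresentedGroup.of false) = QuotientGroup.mk' pmI B := by
  refine ⟨MulEquiv.ofBijective PSLAux.fP ⟨PSLAux.fP_inj, PSLAux.fP_surj⟩, ?_, ?_⟩
  · exact PSLAux.fP_a
  · exact PSLAux.fP_b
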